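/- Let a > 0. For every nonnegative integer n and every real x, ∑_{i=0}^{n} A_i(x) Δ^i C_n^{(a)}(x-1) = (-1)^{n-1} C_n^{(a)}(-1) C_{n-1}^{(a)}(x-2), where A_0 = (-1)^{n-1} C_{n-1}^{(a)}(-2) and, for i ≥ 1, A_i(x) = ∑_{k=1}^i (-1)^k C_{i-k}^{(-a)}(-x+1) [C_k^{(a)}(-1) C_k^{(a)}(x-2) − C_k^{(a)}(-2) C_k^{(a)}(x-1)]. -/

import Mathlib

open Finset


/-- Generalized binomial coefficient `x(x-1)⋯(x-k+1)/k!`. -/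
noncomputable def genChoose (x : ℝ) (k : ℕ) : ℝ :=
  (∏ j ∈ Finset.range k, (x - (j : ℝ))) / (Nat.factorial k : ℝ)

/-- The Charlier polynomial `C_n^{(a)}(x) = ∑_{k=0}^n (x choose k) (-a)^{n-k}/(n-k)!`. -/
noncomputable def charlier (a : ℝ) (n : ℕ) (x : ℝ) : ℝ :=
  ∑ k ∈ Finset.range (n + 1),
    genChoose x k * (-a) ^ (n - k) / (Nat.factorial (n - k) : ℝ)

/-- Charlier polynomial with integer index, with the convention `C_{-1}^{(a)} ≡ 0`. -/
noncomputable def charlierZ (a : ℝ) (n : ℤ) (x : ℝ) : ℝ :=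
  if 0 ≤ n then charlier a n.toNat x else 0

/-- Forward difference operator `Δf(x) = f(x+1) - f(x)`. -/
def fdiff (f : ℝ → ℝ) : ℝ → ℝ := fun x => f (x + 1) - f x

/-- Backward difference operator `∇f(x) = f(x) - f(x-1)`. -/
def bdiff (f : ℝ → ℝ) : ℝ → ℝ := fun x => f x - f (x - 1)

/-- The generalized Charlier polynomial
`C_n^{a,N}(x) = [1 + N(-1)^n C_n^{(a)}(-1)] C_n^{(a)}(x) - N(-1)^n C_n^{(a)}(0) C_n^{(a)}(x-1)`. -/
noncomputable def genCharlier (a N : ℝ) (n : ℕ) (x : ℝ) : ℝ :=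
  (1 + N * (-1) ^ n * charlier a n (-1)) * charlier a n x
    - N * (-1) ^ n * charlier a n 0 * charlier a n (x - 1)

/-- The coefficient `A_i(x)` (for `i ≥ 1`) of the difference equation. -/
noncomputable def Acoef (a : ℝ) (i : ℕ) (x : ℝ) : ℝ :=
  ∑ k ∈ Finset.Icc 1 i, (-1 : ℝ) ^ k * charlier (-a) (i - k) (-x + 1) *
    (charlier a k (-1) * charlier a k (x - 2) - charlier a k (-2) * charlier a k (x - 1))

/-- The coefficient `A_0 = (-1)^{n-1} C_{n-1}^{(a)}(-2)` (with `C_{-1}^{(a)} ≡ 0`). -/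
noncomputable def A0coef (a : ℝ) (n : ℕ) : ℝ :=
  (-1 : ℝ) ^ ((n : ℤ) - 1) * charlierZ a ((n : ℤ) - 1) (-2)

/-- `∑_{i=0}^n A_i(x) Δ^i C_n^{(a)}(x-1) = (-1)^{n-1} C_n^{(a)}(-1) C_{n-1}^{(a)}(x-2)`
(with the convention `C_{-1}^{(a)} ≡ 0`). -/

lemma descPoch_eval (x : ℝ) (k : ℕ) :
    (descPochhammer ℝ k).eval x = ∏ j ∈ Finset.range k, (x - (j:ℝ)) := by
  induction k with
  | zero => simp
  | succ n ih => rw [descPochhammer_succ_eval, ih, Finset.prod_range_succ]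

lemma ringChoose_eq (x : ℝ) (k : ℕ) : Ring.choose x k = genChoose x k := by
  have h := Ring.descPochhammer_eq_factorial_smul_choose (R := ℝ) x k
  rw [← Polynomial.aeval_eq_smeval (R := ℤ) x (descPochhammer ℤ k)] at h
  rw [show ((Polynomial.aeval x) (descPochhammer ℤ k) : ℝ) = (descPochhammer ℝ k).eval x by
    rw [Polynomial.aeval_def, Polynomial.eval₂_eq_eval_map, descPochhammer_map]] at h
  rw [descPoch_eval] at h
  have hk : (Nat.factorial k : ℝ) ≠ 0 := by positivity
  rw [genChoose, eq_div_iff hk, h, nsmul_eq_mul]; ring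

lemma genChoose_zero_left (n : ℕ) (h : n ≠ 0) : genChoose 0 n = 0 := by
  unfold genChoose
  rw [Finset.prod_eq_zero (i := 0) (by simp [Nat.pos_of_ne_zero h]) (by simp)]
  simp

/-- Vandermonde convolution specialized at `(-y) + y = 0`. -/
lemma vandermonde_zero (y : ℝ) (n : ℕ) :
    ∑ ij ∈ Finset.HasAntidiagonal.antidiagonal n, genChoose (-y) ij.1 * genChoose y ij.2
      = if n = 0 then 1 else 0 := by
  have h := Ring.add_choose_eq (r := -y) (s := y) n (Commute.all _ _)
  rw [neg_add_cancel] at h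
  simp only [ringChoose_eq] at h
  rw [← h]
  rcases n with _ | n
  · simp [genChoose]
  · simp [genChoose_zero_left (n+1) (by omega)]

noncomputable def Bser (y : ℝ) : PowerSeries ℝ := PowerSeries.mk (genChoose y)
noncomputable def Eser (c : ℝ) : PowerSeries ℝ :=
  PowerSeries.mk fun k => c ^ k / (Nat.factorial k : ℝ)

lemma Eser_mul (c : ℝ) : Eser c * Eser (-c) = 1 := by
  ext n
  rw [PowerSeries.coeff_mul, Finset.Nat.sum_antidiagonal_eq_sum_range_succ_mk]
  simp only [Eser, PowerSeries.coeff_mk, PowerSeries.coeff_one]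
  have : ∀ k ∈ range (n+1), c^k / k.factorial * ((-c)^(n-k) / (n-k).factorial)
      = c^k * (-c)^(n-k) * (n.choose k) / n.factorial := by
    intro k hk
    rw [mem_range] at hk
    rw [Nat.cast_choose ℝ (by omega : k ≤ n)]
    have h1 : (k.factorial : ℝ) ≠ 0 := by positivity
    have h2 : ((n-k).factorial : ℝ) ≠ 0 := by positivity
    have h3 : (n.factorial : ℝ) ≠ 0 := by positivity
    field_simp
  rw [Finset.sum_congr rfl this, ← Finset.sum_div, ← add_pow]
  rcases n with _ | n
  · simp
  · simp [zero_pow]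

lemma Bser_mul (y : ℝ) : Bser (-y) * Bser y = 1 := by
  ext n
  rw [PowerSeries.coeff_mul]
  simp only [Bser, PowerSeries.coeff_mk, PowerSeries.coeff_one]
  exact vandermonde_zero y n

lemma charlier_coeff (a x : ℝ) (n : ℕ) :
    charlier a n x = PowerSeries.coeff n (Bser x * Eser (-a)) := by
  rw [PowerSeries.coeff_mul, Finset.Nat.sum_antidiagonal_eq_sum_range_succ_mk]
  simp only [Bser, Eser, PowerSeries.coeff_mk, charlier]
  exact Finset.sum_congr rfl fun k _ => by rw [mul_div_assoc]

/-- The key convolution identity. -/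
lemma conv (a y : ℝ) (m : ℕ) :
    ∑ j ∈ range (m + 1), charlier (-a) j (-y) * charlier a (m - j) y
      = if m = 0 then 1 else 0 := by
  have key : (Bser (-y) * Eser a) * (Bser y * Eser (-a)) = 1 := by
    rw [show (Bser (-y) * Eser a) * (Bser y * Eser (-a))
        = (Bser (-y) * Bser y) * (Eser a * Eser (-a)) by ring,
      Bser_mul, Eser_mul, one_mul]
  have h := congrArg (PowerSeries.coeff m) key
  rw [PowerSeries.coeff_mul, Finset.Nat.sum_antidiagonal_eq_sum_range_succ_mk] at h
  simp only [PowerSeries.coeff_one] at h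
  rw [← h]
  refine Finset.sum_congr rfl fun j _ => ?_
  rw [charlier_coeff (-a) (-y) j, charlier_coeff a y (m - j), neg_neg]

lemma genChoose_pascal (x : ℝ) (k : ℕ) :
    genChoose (x + 1) (k + 1) = genChoose x (k + 1) + genChoose x k := by
  have hfac : (Nat.factorial (k+1) : ℝ) ≠ 0 := by positivity
  have hfac2 : (Nat.factorial k : ℝ) ≠ 0 := by positivity
  have hprod : ∏ j ∈ range (k+1), (x + 1 - (j:ℝ)) = (x+1) * ∏ j ∈ range k, (x - (j:ℝ)) := by
    rw [Finset.prod_range_succ' (fun j => x + 1 - (j:ℝ))]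
    push_cast
    rw [show (∏ j ∈ range k, (x + 1 - ((j:ℝ) + 1))) = ∏ j ∈ range k, (x - (j:ℝ)) from
      Finset.prod_congr rfl fun j _ => by ring]
    ring
  unfold genChoose
  rw [hprod, Finset.prod_range_succ, Nat.factorial_succ]
  push_cast
  field_simp
  ring

lemma fdiff_charlier (a : ℝ) (n : ℕ) (x : ℝ) :
    charlier a (n + 1) (x + 1) - charlier a (n + 1) x = charlier a n x := by
  have : charlier a (n+1) (x+1) - charlier a (n+1) x
      = ∑ k ∈ range (n + 2),
          (genChoose (x+1) k - genChoose x k) * ((-a) ^ (n+1-k) / (Nat.factorial (n+1-k) : ℝ)) := by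
    unfold charlier
    rw [← Finset.sum_sub_distrib]
    exact Finset.sum_congr rfl fun k _ => by rw [mul_div_assoc, mul_div_assoc, ← sub_mul]
  rw [this, Finset.sum_range_succ' _ (n+1)]
  simp only [genChoose_pascal, sub_self, zero_mul, add_zero]
  have h0 : genChoose (x+1) 0 - genChoose x 0 = 0 := by simp [genChoose]
  rw [h0, zero_mul, add_zero]
  unfold charlier
  refine Finset.sum_congr rfl fun k hk => ?_
  have : n + 1 - (k + 1) = n - k := by omega
  rw [this, add_sub_cancel_left, mul_div_assoc]

lemma fdiff_charlier' (a : ℝ) (n : ℕ) : fdiff (charlier a (n + 1)) = charlier a n :=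
  funext fun x => fdiff_charlier a n x

lemma iterate_fdiff_charlier (a : ℝ) : ∀ (i n : ℕ), i ≤ n →
    fdiff^[i] (charlier a n) = charlier a (n - i) := by
  intro i
  induction i with
  | zero => intro n _; simp
  | succ i ih =>
    intro n hn
    obtain ⟨m, rfl⟩ : ∃ m, n = m + 1 := ⟨n - 1, by omega⟩
    rw [Function.iterate_succ_apply, fdiff_charlier' a m, ih m (by omega),
      Nat.succ_sub_succ]

theorem charlier_Acoef_sum_shifted_eq (a : ℝ) (ha : 0 < a) (n : ℕ) (x : ℝ) :
    ∑ i ∈ Finset.range (n + 1),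
        (if i = 0 then A0coef a n else Acoef a i x) * fdiff^[i] (charlier a n) (x - 1)
      = (-1 : ℝ) ^ ((n : ℤ) - 1) * charlier a n (-1) * charlierZ a ((n : ℤ) - 1) (x - 2) := by
  rcases n with _ | m
  · norm_num [A0coef, charlierZ]
  -- replace iterated differences
  have step1 : ∑ i ∈ Finset.range (m + 1 + 1),
        (if i = 0 then A0coef a (m+1) else Acoef a i x) * fdiff^[i] (charlier a (m+1)) (x - 1)
      = ∑ i ∈ Finset.range (m + 1 + 1),
        (if i = 0 then A0coef a (m+1) else Acoef a i x) * charlier a (m + 1 - i) (x - 1) := by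
    refine Finset.sum_congr rfl fun i hi => ?_
    rw [mem_range] at hi
    rw [iterate_fdiff_charlier a i (m+1) (by omega)]
  rw [step1, Finset.sum_range_succ']
  simp only [Nat.succ_ne_zero, if_neg, Nat.add_sub_cancel_left, if_pos rfl, reduceIte,
    Nat.sub_zero]
  have hsub : ∀ i, m + 1 - (i + 1) = m - i := fun i => by omega
  -- the double sum
  have step3 : ∑ i ∈ Finset.range (m + 1), Acoef a (i+1) x * charlier a (m + 1 - (i+1)) (x - 1)
      = ∑ k ∈ Finset.Icc 1 (m+1), ((-1:ℝ)^k *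
          (charlier a k (-1) * charlier a k (x - 2) - charlier a k (-2) * charlier a k (x - 1))) *
          ∑ j ∈ range ((m + 1 - k) + 1), charlier (-a) j (-(x-1)) * charlier a ((m+1-k) - j) (x-1) := by
    simp only [Acoef, Finset.sum_mul, hsub]
    rw [Finset.sum_comm' (t' := Finset.Icc 1 (m+1)) (s' := fun k => Finset.Ico (k-1) (m+1))
      (fun i k => by simp only [mem_range, mem_Icc, mem_Ico]; omega)]
    refine Finset.sum_congr rfl fun k hk => ?_
    rw [mem_Icc] at hk
    rw [Finset.mul_sum, Finset.sum_Ico_eq_sum_range,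
      show m + 1 - (k - 1) = (m + 1 - k) + 1 by omega]
    refine Finset.sum_congr rfl fun j hj => ?_
    rw [mem_range] at hj
    rw [show k - 1 + j + 1 - k = j by omega, show m - (k - 1 + j) = m + 1 - k - j by omega,
      show -x + 1 = -(x-1) by ring]
    ring
  rw [step3]
  -- kill the inner sums via the convolution identity
  have step4 : ∀ k ∈ Finset.Icc 1 (m+1), ((-1:ℝ)^k *
          (charlier a k (-1) * charlier a k (x - 2) - charlier a k (-2) * charlier a k (x - 1))) *
          ∑ j ∈ range ((m + 1 - k) + 1), charlier (-a) j (-(x-1)) * charlier a ((m+1-k) - j) (x-1)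
      = if k = m+1 then (-1:ℝ)^(m+1) *
          (charlier a (m+1) (-1) * charlier a (m+1) (x - 2)
            - charlier a (m+1) (-2) * charlier a (m+1) (x - 1)) else 0 := by
    intro k hk
    rw [mem_Icc] at hk
    rw [conv a (x-1) (m+1-k)]
    rcases eq_or_ne k (m+1) with rfl | h
    · simp
    · rw [if_neg (by omega : ¬ m + 1 - k = 0), if_neg h, mul_zero]
  rw [Finset.sum_congr rfl step4, Finset.sum_ite_eq' (Finset.Icc 1 (m+1)) (m+1),
    if_pos (by simp [mem_Icc])]
  -- final algebra
  have hA0 : A0coef a (m+1) = (-1:ℝ)^m * charlier a m (-2) := by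
    unfold A0coef charlierZ
    rw [show ((m+1 : ℕ) : ℤ) - 1 = (m : ℤ) by push_cast; ring]
    rw [if_pos (by positivity), Int.toNat_natCast, zpow_natCast]
  rw [hA0, show ((m+1 : ℕ) : ℤ) - 1 = (m : ℤ) by push_cast; ring]
  unfold charlierZ
  rw [if_pos (by positivity), Int.toNat_natCast, zpow_natCast]
  have h1 : charlier a (m+1) (-1) = charlier a (m+1) (-2) + charlier a m (-2) := by
    have := fdiff_charlier a m (-2)
    rw [show (-2:ℝ) + 1 = -1 by norm_num] at this
    linarith
  have h2 : charlier a (m+1) (x-1) = charlier a (m+1) (x-2) + charlier a m (x-2) := by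
    have := fdiff_charlier a m (x-2)
    rw [show x - 2 + 1 = x - 1 by ring] at this
    linarith
  rw [h1, h2]
  ring
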